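/- (Surrogate function for the Frobenius norm.) Let p, k ≥ 1, let Σ_pn ∈ ℂ^{k×p} and let Σ_n ∈ ℂ^{k×k} be Hermitian such that Q := |Σ_n| ∘ Σ_n is positive semidefinite. Set P := |Σ_pn| ∘ Σ_pn. Fix w ∈ ℂ^p and define, for w̄ ∈ ℂ^k, f(w̄) = −4·Re(w̄ᴴ P w) − 2·Re(w̄ᴴ Q w̄) and g(w̄ | w̄⁰) = −Re(w̄ᴴ · 4·[P w + Q w̄⁰]). Then for every w̄⁰ ∈ ℂ^k and every w̄ ∈ ℂ^k, f(w̄) − f(w̄⁰) ≤ g(w̄ | w̄⁰) − g(w̄⁰ | w̄⁰); i.e. w̄ ↦ g(w̄ | w̄⁰) + f(w̄⁰) − g(w̄⁰ | w̄⁰) majorizes f with equality at w̄⁰. -/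

import Mathlib

open Matrix
open scoped ComplexOrder

/-- The entrywise modulus of a complex matrix, identified with its complex image. -/
noncomputable def matAbs {m n : Type*} (B : Matrix m n ℂ) : Matrix m n ℂ :=
  Matrix.of fun i j => ((‖B i j‖ : ℝ) : ℂ)

/-- Surrogate function for the Frobenius norm: the cost
`f(w̄) = −4·Re(w̄ᴴ P w) − 2·Re(w̄ᴴ Q w̄)` with `P = |Σ_pn| ∘ Σ_pn`,
`Q = |Σ_n| ∘ Σ_n` positive semidefinite, is majorized (up to an additive constant,
with equality at `w̄⁰`) by `g(w̄|w̄⁰) = −Re(w̄ᴴ · 4·[P w + Q w̄⁰])`. -/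
theorem frobenius_surrogate_majorizes {p k : ℕ} (hp : 1 ≤ p) (hk : 1 ≤ k)
    (Sigpn : Matrix (Fin k) (Fin p) ℂ) (Sign : Matrix (Fin k) (Fin k) ℂ)
    (hSign : Sign.IsHermitian)
    (hQ : (Matrix.hadamard (matAbs Sign) Sign).PosSemidef)
    (w : Fin p → ℂ)
    (f : (Fin k → ℂ) → ℝ)
    (hf : ∀ wb, f wb =
      -(4 * (star wb ⬝ᵥ (Matrix.hadamard (matAbs Sigpn) Sigpn) *ᵥ w).re)
        - 2 * (star wb ⬝ᵥ (Matrix.hadamard (matAbs Sign) Sign) *ᵥ wb).re)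
    (g : (Fin k → ℂ) → (Fin k → ℂ) → ℝ)
    (hg : ∀ wb wb0, g wb wb0 =
      -(star wb ⬝ᵥ ((4 : ℂ) •
        ((Matrix.hadamard (matAbs Sigpn) Sigpn) *ᵥ w
          + (Matrix.hadamard (matAbs Sign) Sign) *ᵥ wb0))).re) :
    ∀ wb0 wb : Fin k → ℂ, f wb - f wb0 ≤ g wb wb0 - g wb0 wb0 := by
  intro wb0 wb
  set Q := Matrix.hadamard (matAbs Sign) Sign with hQdef
  set P := Matrix.hadamard (matAbs Sigpn) Sigpn with hPdef
  have hsym : ∀ x y : Fin k → ℂ,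
      star x ⬝ᵥ Q *ᵥ y = star (star y ⬝ᵥ Q *ᵥ x) := by
    intro x y
    rw [star_dotProduct, star_mulVec, hQ.isHermitian.eq, ← dotProduct_mulVec]
  have key := hQ.dotProduct_mulVec_nonneg (wb - wb0)
  have hre : 0 ≤ (star (wb - wb0) ⬝ᵥ Q *ᵥ (wb - wb0)).re := key.1
  have hexp : star (wb - wb0) ⬝ᵥ Q *ᵥ (wb - wb0)
      = star wb ⬝ᵥ Q *ᵥ wb - star wb ⬝ᵥ Q *ᵥ wb0
        - star wb0 ⬝ᵥ Q *ᵥ wb + star wb0 ⬝ᵥ Q *ᵥ wb0 := by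
    rw [star_sub, Matrix.mulVec_sub, dotProduct_sub, sub_dotProduct,
      sub_dotProduct]
    ring
  have hcross : (star wb0 ⬝ᵥ Q *ᵥ wb).re = (star wb ⬝ᵥ Q *ᵥ wb0).re := by
    rw [hsym wb0 wb, Complex.star_def, Complex.conj_re]
  rw [hexp] at hre
  simp only [Complex.sub_re, Complex.add_re, hcross] at hre
  rw [hf, hf, hg, hg]
  have hexpand : ∀ x : Fin k → ℂ,
      (star x ⬝ᵥ ((4 : ℂ) • (P *ᵥ w + Q *ᵥ wb0))).re
        = 4 * (star x ⬝ᵥ P *ᵥ w).re + 4 * (star x ⬝ᵥ Q *ᵥ wb0).re := by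
    intro x
    rw [dotProduct_smul, dotProduct_add, smul_eq_mul, mul_add, Complex.add_re]
    simp [Complex.mul_re]
  rw [hexpand, hexpand]
  linarith
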